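/- arXiv:1404.2323 — 4 statements merged into one kernel-verified Lean document; each statement's English description precedes it below -/
import Mathlib

section
/- Let K be a field and let t₁, t₂, t₃, ℓ₁, ℓ₂ be nonzero elements of K satisfying ℓ₁·ℓ₂·t₁·t₂·t₃ = 1 (i.e. ℓ₁ℓ₂ = κ where κ := (t₁t₂t₃)⁻¹), with ℓ₁ ≠ 1 and ℓ₂ ≠ 1. Then ((t₁⁻¹ + t₂⁻¹ + t₃⁻¹ + ℓ₁⁻¹ + ℓ₂⁻¹) − (t₁ + t₂ + t₃ + ℓ₁ + ℓ₂)) / ((1 − ℓ₁⁻¹)·(1 − ℓ₂⁻¹)) = (κ − 1) + (ℓ₁ / ((1 − ℓ₁)·(1 − ℓ₂⁻¹)))·((t₁ + t₂ + t₃) + κ − (t₁⁻¹ + t₂⁻¹ + t₃⁻¹) − κ⁻¹). -/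
/-- Character-level form of the K-theory identity
`(T*Z − TZ)|_X / ((1 − 𝓛₁⁻¹)(1 − 𝓛₂⁻¹)) = 𝒦_X − 𝒪_X + 𝓛₁/((1 − 𝓛₁)(1 − 𝓛₂⁻¹))·(TX + 𝒦_X − T*X − 𝒦_X*)`
with weights `t₁, t₂, t₃` on `TX`, weights `ℓ₁, ℓ₂` on `𝓛₁, 𝓛₂`, and
`κ = (t₁t₂t₃)⁻¹`, under the Calabi–Yau condition `ℓ₁ℓ₂t₁t₂t₃ = 1`. -/
theorem deg0class1_identity {K : Type*} [Field K]
    (t₁ t₂ t₃ ℓ₁ ℓ₂ : K)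
    (ht₁ : t₁ ≠ 0) (ht₂ : t₂ ≠ 0) (ht₃ : t₃ ≠ 0)
    (hℓ₁ : ℓ₁ ≠ 0) (hℓ₂ : ℓ₂ ≠ 0)
    (hCY : ℓ₁ * ℓ₂ * t₁ * t₂ * t₃ = 1)
    (hℓ₁1 : ℓ₁ ≠ 1) (hℓ₂1 : ℓ₂ ≠ 1) :
    ((t₁⁻¹ + t₂⁻¹ + t₃⁻¹ + ℓ₁⁻¹ + ℓ₂⁻¹) - (t₁ + t₂ + t₃ + ℓ₁ + ℓ₂)) /
        ((1 - ℓ₁⁻¹) * (1 - ℓ₂⁻¹)) =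
      ((t₁ * t₂ * t₃)⁻¹ - 1) +
        (ℓ₁ / ((1 - ℓ₁) * (1 - ℓ₂⁻¹))) *
          ((t₁ + t₂ + t₃) + (t₁ * t₂ * t₃)⁻¹ -
            (t₁⁻¹ + t₂⁻¹ + t₃⁻¹) - ((t₁ * t₂ * t₃)⁻¹)⁻¹) := by
  have h1 : 1 - ℓ₁ ≠ 0 := sub_ne_zero.mpr (Ne.symm hℓ₁1)
  have h2 : 1 - ℓ₂ ≠ 0 := sub_ne_zero.mpr (Ne.symm hℓ₂1)
  have et1 : t₁⁻¹ = ℓ₁ * ℓ₂ * t₂ * t₃ := by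
    exact inv_eq_of_mul_eq_one_left (by linear_combination hCY)
  have et2 : t₂⁻¹ = ℓ₁ * ℓ₂ * t₁ * t₃ := by
    exact inv_eq_of_mul_eq_one_left (by linear_combination hCY)
  have et3 : t₃⁻¹ = ℓ₁ * ℓ₂ * t₁ * t₂ := by
    exact inv_eq_of_mul_eq_one_left (by linear_combination hCY)
  have et : (t₁ * t₂ * t₃)⁻¹ = ℓ₁ * ℓ₂ := by
    exact inv_eq_of_mul_eq_one_left (by linear_combination hCY)
  have el1 : ℓ₁⁻¹ = ℓ₂ * t₁ * t₂ * t₃ := by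
    exact inv_eq_of_mul_eq_one_left (by linear_combination hCY)
  have el2 : ℓ₂⁻¹ = ℓ₁ * t₁ * t₂ * t₃ := by
    exact inv_eq_of_mul_eq_one_left (by linear_combination hCY)
  have hd1 : 1 - ℓ₂ * t₁ * t₂ * t₃ ≠ 0 := by
    rw [← el1, sub_ne_zero]
    intro h; exact hℓ₁1 (by rw [← inv_inv ℓ₁, ← h, inv_one])
  have hd2 : 1 - ℓ₁ * t₁ * t₂ * t₃ ≠ 0 := by
    rw [← el2, sub_ne_zero]
    intro h; exact hℓ₂1 (by rw [← inv_inv ℓ₂, ← h, inv_one])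
  have ell : (ℓ₁ * ℓ₂)⁻¹ = t₁ * t₂ * t₃ := by
    exact inv_eq_of_mul_eq_one_left (by linear_combination hCY)
  rw [et1, et2, et3, et, el1, el2, ell]
  have hd1' : 1 - ℓ₂ * t₂ * t₃ * t₁ ≠ 0 := by convert hd1 using 1; ring
  have hd2' : 1 - ℓ₁ * t₂ * t₃ * t₁ ≠ 0 := by convert hd2 using 1; ring
  field_simp
  linear_combination
    (2*ℓ₁ - ℓ₁^2 + ℓ₂ - ℓ₁*ℓ₂*t₁*t₂*t₃ + ℓ₁^2*ℓ₂*t₁*t₂*t₃ - ℓ₁*t₁*t₂*t₃ + t₁ + t₂ + t₃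
      - ℓ₁*ℓ₂*t₂*t₃ - ℓ₁*ℓ₂*t₁*t₃ - ℓ₁*ℓ₂*t₁*t₂ - 1) * hCY
end

section
/- Let K be a field and let s₁, s₂, s₃, s₄, s₅ be nonzero elements of K with s₁·s₂·s₃·s₄·s₅ = 1 and sᵢ² ≠ 1 for every i. Then (∑_{i=1}^{5} sᵢ⁻² − ∑_{i=1}^{5} sᵢ²) / ∏_{i=1}^{5} (sᵢ − sᵢ⁻¹) = ((s₁s₂s₃)⁻¹ − s₁s₂s₃) / ∏_{i=1}^{3} (sᵢ − sᵢ⁻¹) + (∏_{1 ≤ i < j ≤ 3} (sᵢsⱼ − sᵢ⁻¹sⱼ⁻¹)) / ∏_{i=1}^{5} (sᵢ − sᵢ⁻¹). -/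
set_option maxHeartbeats 1000000 in
/-- The identity (id0cl) for `Z = ℂ⁵`: writing `tᵢ = sᵢ²` for the five torus
weights (so `∏ tᵢ = 1`), one has
`(∑ tᵢ⁻¹ − ∑ tᵢ)/∏(tᵢ^{1/2} − tᵢ^{-1/2})
  = (−(t₁t₂t₃)^{1/2} + (t₁t₂t₃)^{-1/2})/∏_{i≤3}(tᵢ^{1/2} − tᵢ^{-1/2})
    + ∏_{i<j≤3}((tᵢtⱼ)^{1/2} − (tᵢtⱼ)^{-1/2})/∏_{i≤5}(tᵢ^{1/2} − tᵢ^{-1/2})`. -/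
theorem id0cl_identity {K : Type*} [Field K]
    (s₁ s₂ s₃ s₄ s₅ : K)
    (h₁ : s₁ ≠ 0) (h₂ : s₂ ≠ 0) (h₃ : s₃ ≠ 0) (h₄ : s₄ ≠ 0) (h₅ : s₅ ≠ 0)
    (hprod : s₁ * s₂ * s₃ * s₄ * s₅ = 1)
    (hs₁ : s₁ ^ 2 ≠ 1) (hs₂ : s₂ ^ 2 ≠ 1) (hs₃ : s₃ ^ 2 ≠ 1)
    (hs₄ : s₄ ^ 2 ≠ 1) (hs₅ : s₅ ^ 2 ≠ 1) :
    ((s₁⁻¹ ^ 2 + s₂⁻¹ ^ 2 + s₃⁻¹ ^ 2 + s₄⁻¹ ^ 2 + s₅⁻¹ ^ 2) -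
        (s₁ ^ 2 + s₂ ^ 2 + s₃ ^ 2 + s₄ ^ 2 + s₅ ^ 2)) /
      ((s₁ - s₁⁻¹) * (s₂ - s₂⁻¹) * (s₃ - s₃⁻¹) * (s₄ - s₄⁻¹) * (s₅ - s₅⁻¹)) =
      ((s₁ * s₂ * s₃)⁻¹ - s₁ * s₂ * s₃) /
        ((s₁ - s₁⁻¹) * (s₂ - s₂⁻¹) * (s₃ - s₃⁻¹)) +
      ((s₁ * s₂ - s₁⁻¹ * s₂⁻¹) * (s₁ * s₃ - s₁⁻¹ * s₃⁻¹) * (s₂ * s₃ - s₂⁻¹ * s₃⁻¹)) /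
        ((s₁ - s₁⁻¹) * (s₂ - s₂⁻¹) * (s₃ - s₃⁻¹) * (s₄ - s₄⁻¹) * (s₅ - s₅⁻¹)) := by
  have e₁ : s₁⁻¹ = s₂ * s₃ * s₄ * s₅ := by
    field_simp; linear_combination -hprod
  have e₂ : s₂⁻¹ = s₁ * s₃ * s₄ * s₅ := by
    field_simp; linear_combination -hprod
  have e₃ : s₃⁻¹ = s₁ * s₂ * s₄ * s₅ := by
    field_simp; linear_combination -hprod
  have e₄ : s₄⁻¹ = s₁ * s₂ * s₃ * s₅ := by
    field_simp; linear_combination -hprod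
  have e₅ : s₅⁻¹ = s₁ * s₂ * s₃ * s₄ := by
    field_simp; linear_combination -hprod
  have e₁₂₃ : (s₁ * s₂ * s₃)⁻¹ = s₄ * s₅ := by
    field_simp; linear_combination -hprod
  have p₁ : s₁ - s₂ * s₃ * s₄ * s₅ ≠ 0 := by
    intro h; exact hs₁ (by linear_combination s₁ * h + hprod)
  have p₂ : s₂ - s₁ * s₃ * s₄ * s₅ ≠ 0 := by
    intro h; exact hs₂ (by linear_combination s₂ * h + hprod)
  have p₃ : s₃ - s₁ * s₂ * s₄ * s₅ ≠ 0 := by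
    intro h; exact hs₃ (by linear_combination s₃ * h + hprod)
  have p₄ : s₄ - s₁ * s₂ * s₃ * s₅ ≠ 0 := by
    intro h; exact hs₄ (by linear_combination s₄ * h + hprod)
  have p₅ : s₅ - s₁ * s₂ * s₃ * s₄ ≠ 0 := by
    intro h; exact hs₅ (by linear_combination s₅ * h + hprod)
  rw [e₁, e₂, e₃, e₄, e₅, e₁₂₃]
  have key :
      ((s₂ * s₃ * s₄ * s₅) ^ 2 + (s₁ * s₃ * s₄ * s₅) ^ 2 + (s₁ * s₂ * s₄ * s₅) ^ 2 +
          (s₁ * s₂ * s₃ * s₅) ^ 2 + (s₁ * s₂ * s₃ * s₄) ^ 2 -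
        (s₁ ^ 2 + s₂ ^ 2 + s₃ ^ 2 + s₄ ^ 2 + s₅ ^ 2)) =
      (s₄ * s₅ - s₁ * s₂ * s₃) *
          ((s₄ - s₁ * s₂ * s₃ * s₅) * (s₅ - s₁ * s₂ * s₃ * s₄)) +
        (s₁ * s₂ - (s₂ * s₃ * s₄ * s₅) * (s₁ * s₃ * s₄ * s₅)) *
          (s₁ * s₃ - (s₂ * s₃ * s₄ * s₅) * (s₁ * s₂ * s₄ * s₅)) *
          (s₂ * s₃ - (s₁ * s₃ * s₄ * s₅) * (s₁ * s₂ * s₄ * s₅)) := by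
    linear_combination
      (s₅ ^ 2 + s₄ ^ 2 + s₄ ^ 2 * s₅ ^ 2 + s₃ ^ 2 + s₂ ^ 2 -
        s₂ ^ 2 * s₃ ^ 2 * s₄ ^ 2 * s₅ ^ 2 - s₁ * s₂ * s₃ * s₄ * s₅ +
        s₁ * s₂ * s₃ * s₄ ^ 3 * s₅ ^ 3 + s₁ * s₂ * s₃ ^ 3 * s₄ * s₅ +
        s₁ * s₂ ^ 3 * s₃ * s₄ * s₅ - s₁ * s₂ ^ 3 * s₃ ^ 3 * s₄ ^ 3 * s₅ ^ 3 +
        s₁ ^ 2 - s₁ ^ 2 * s₃ ^ 2 * s₄ ^ 2 * s₅ ^ 2 - s₁ ^ 2 * s₂ ^ 2 * s₄ ^ 2 * s₅ ^ 2 +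
        s₁ ^ 2 * s₂ ^ 2 * s₃ ^ 2 + s₁ ^ 2 * s₂ ^ 2 * s₃ ^ 2 * s₄ ^ 4 * s₅ ^ 4 +
        s₁ ^ 3 * s₂ * s₃ * s₄ * s₅ - s₁ ^ 3 * s₂ * s₃ ^ 3 * s₄ ^ 3 * s₅ ^ 3 -
        s₁ ^ 3 * s₂ ^ 3 * s₃ * s₄ ^ 3 * s₅ ^ 3 +
        s₁ ^ 3 * s₂ ^ 3 * s₃ ^ 3 * s₄ ^ 5 * s₅ ^ 5) * hprod
  rw [key, _root_.add_div]
  congr 1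
  rw [show (s₁ - s₂ * s₃ * s₄ * s₅) * (s₂ - s₁ * s₃ * s₄ * s₅) * (s₃ - s₁ * s₂ * s₄ * s₅) *
        (s₄ - s₁ * s₂ * s₃ * s₅) * (s₅ - s₁ * s₂ * s₃ * s₄) =
      ((s₁ - s₂ * s₃ * s₄ * s₅) * (s₂ - s₁ * s₃ * s₄ * s₅) * (s₃ - s₁ * s₂ * s₄ * s₅)) *
        ((s₄ - s₁ * s₂ * s₃ * s₅) * (s₅ - s₁ * s₂ * s₃ * s₄)) by ring]
  exact mul_div_mul_right _ _ (mul_ne_zero p₄ p₅)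
end

section
/- Let K be a field (or any commutative ring in which the stated inverses exist) and let t₁, …, t₅ be nonzero elements with t₁·t₂·t₃·t₄·t₅ = 1. Let A denote the ten-element family (t₁, …, t₅, t₁⁻¹, …, t₅⁻¹); write e_k(A) for the k-th elementary symmetric polynomial of A, h₂(A) = ∑_{1 ≤ i ≤ j ≤ 10} A_i·A_j for the complete homogeneous symmetric polynomial of degree 2 of A, v = t₁ + t₂ + t₃ + t₄ + t₅, E₊ = e₀(t) + e₂(t) + e₄(t) and E₋ = e₁(t) + e₃(t) + e₅(t), where e_k(t) are the elementary symmetric polynomials of t₁, …, t₅. Then (h₂(A) − 1) − e₁(A) + (e₃(A) − e₂(A) + e₁(A) − 1) + (−e₁(A)·E₊ + E₊ + E₋) = −v·(E₊ − E₋). -/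
open Finset

/-- The `k`-th elementary symmetric polynomial of a finite family of ring elements. -/
def esymmFam {K : Type*} [CommRing K] {n : ℕ} (A : Fin n → K) (k : ℕ) : K :=
  ∑ S ∈ Finset.univ.powersetCard k, ∏ i ∈ S, A i

/-- The complete homogeneous symmetric polynomial of degree 2 of a finite family,
`h₂(A) = ∑_{i ≤ j} Aᵢ·Aⱼ`. -/
def h2Fam {K : Type*} [CommRing K] {n : ℕ} (A : Fin n → K) : K :=
  ∑ p ∈ Finset.univ.filter (fun p : Fin n × Fin n => p.1 ≤ p.2), A p.1 * A p.2

set_option maxRecDepth 100000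
set_option maxHeartbeats 4000000

lemma esymmA1 {K : Type*} [CommRing K] (A : Fin 10 → K) :
    esymmFam A 1 = A 0 + A 1 + A 2 + A 3 + A 4 + A 5 + A 6 + A 7 + A 8 + A 9 := by
  rw [esymmFam, show (Finset.univ.powersetCard 1 : Finset (Finset (Fin 10))) =
    ([({0} : Finset (Fin 10)),({1} : Finset (Fin 10)),({2} : Finset (Fin 10)),({3} : Finset (Fin 10)),({4} : Finset (Fin 10)),({5} : Finset (Fin 10)),({6} : Finset (Fin 10)),({7} : Finset (Fin 10)),({8} : Finset (Fin 10)),({9} : Finset (Fin 10))]).toFinset from by decide,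
    List.sum_toFinset _ (by decide)]
  simp +decide [Finset.prod_insert, Finset.mem_singleton]
  ring

lemma esymmA2 {K : Type*} [CommRing K] (A : Fin 10 → K) :
    esymmFam A 2 = A 0*A 1 + A 0*A 2 + A 0*A 3 + A 0*A 4 + A 0*A 5 + A 0*A 6 + A 0*A 7 + A 0*A 8 + A 0*A 9 + A 1*A 2 + A 1*A 3 + A 1*A 4 + A 1*A 5 + A 1*A 6 + A 1*A 7 + A 1*A 8 + A 1*A 9 + A 2*A 3 + A 2*A 4 + A 2*A 5 + A 2*A 6 + A 2*A 7 + A 2*A 8 + A 2*A 9 + A 3*A 4 + A 3*A 5 + A 3*A 6 + A 3*A 7 + A 3*A 8 + A 3*A 9 + A 4*A 5 + A 4*A 6 + A 4*A 7 + A 4*A 8 + A 4*A 9 + A 5*A 6 + A 5*A 7 + A 5*A 8 + A 5*A 9 + A 6*A 7 + A 6*A 8 + A 6*A 9 + A 7*A 8 + A 7*A 9 + A 8*A 9 := by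
  rw [esymmFam, show (Finset.univ.powersetCard 2 : Finset (Finset (Fin 10))) =
    ([({0,1} : Finset (Fin 10)),({0,2} : Finset (Fin 10)),({0,3} : Finset (Fin 10)),({0,4} : Finset (Fin 10)),({0,5} : Finset (Fin 10)),({0,6} : Finset (Fin 10)),({0,7} : Finset (Fin 10)),({0,8} : Finset (Fin 10)),({0,9} : Finset (Fin 10)),({1,2} : Finset (Fin 10)),({1,3} : Finset (Fin 10)),({1,4} : Finset (Fin 10)),({1,5} : Finset (Fin 10)),({1,6} : Finset (Fin 10)),({1,7} : Finset (Fin 10)),({1,8} : Finset (Fin 10)),({1,9} : Finset (Fin 10)),({2,3} : Finset (Fin 10)),({2,4} : Finset (Fin 10)),({2,5} : Finset (Fin 10)),({2,6} : Finset (Fin 10)),({2,7} : Finset (Fin 10)),({2,8} : Finset (Fin 10)),({2,9} : Finset (Fin 10)),({3,4} : Finset (Fin 10)),({3,5} : Finset (Fin 10)),({3,6} : Finset (Fin 10)),({3,7} : Finset (Fin 10)),({3,8} : Finset (Fin 10)),({3,9} : Finset (Fin 10)),({4,5} : Finset (Fin 10)),({4,6} : Finset (Fin 10)),({4,7} : Finset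 (Fin 10)),({4,8} : Finset (Fin 10)),({4,9} : Finset (Fin 10)),({5,6} : Finset (Fin 10)),({5,7} : Finset (Fin 10)),({5,8} : Finset (Fin 10)),({5,9} : Finset (Fin 10)),({6,7} : Finset (Fin 10)),({6,8} : Finset (Fin 10)),({6,9} : Finset (Fin 10)),({7,8} : Finset (Fin 10)),({7,9} : Finset (Fin 10)),({8,9} : Finset (Fin 10))]).toFinset from by decide,
    List.sum_toFinset _ (by decide)]
  simp +decide [Finset.prod_insert, Finset.mem_singleton]
  ring

lemma esymmA3 {K : Type*} [CommRing K] (A : Fin 10 → K) :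
    esymmFam A 3 = A 0*A 1*A 2 + A 0*A 1*A 3 + A 0*A 1*A 4 + A 0*A 1*A 5 + A 0*A 1*A 6 + A 0*A 1*A 7 + A 0*A 1*A 8 + A 0*A 1*A 9 + A 0*A 2*A 3 + A 0*A 2*A 4 + A 0*A 2*A 5 + A 0*A 2*A 6 + A 0*A 2*A 7 + A 0*A 2*A 8 + A 0*A 2*A 9 + A 0*A 3*A 4 + A 0*A 3*A 5 + A 0*A 3*A 6 + A 0*A 3*A 7 + A 0*A 3*A 8 + A 0*A 3*A 9 + A 0*A 4*A 5 + A 0*A 4*A 6 + A 0*A 4*A 7 + A 0*A 4*A 8 + A 0*A 4*A 9 + A 0*A 5*A 6 + A 0*A 5*A 7 + A 0*A 5*A 8 + A 0*A 5*A 9 + A 0*A 6*A 7 + A 0*A 6*A 8 + A 0*A 6*A 9 + A 0*A 7*A 8 + A 0*A 7*A 9 + A 0*A 8*A 9 + A 1*A 2*A 3 + A 1*A 2*A 4 + A 1*A 2*A 5 + A 1*A 2*A 6 + A 1*A 2*A 7 + A 1*A 2*A 8 + A 1*A 2*A 9 + A 1*A 3*A 4 + A 1*A 3*A 5 + A 1*A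 3*A 6 + A 1*A 3*A 7 + A 1*A 3*A 8 + A 1*A 3*A 9 + A 1*A 4*A 5 + A 1*A 4*A 6 + A 1*A 4*A 7 + A 1*A 4*A 8 + A 1*A 4*A 9 + A 1*A 5*A 6 + A 1*A 5*A 7 + A 1*A 5*A 8 + A 1*A 5*A 9 + A 1*A 6*A 7 + A 1*A 6*A 8 + A 1*A 6*A 9 + A 1*A 7*A 8 + A 1*A 7*A 9 + A 1*A 8*A 9 + A 2*A 3*A 4 + A 2*A 3*A 5 + A 2*A 3*A 6 + A 2*A 3*A 7 + A 2*A 3*A 8 + A 2*A 3*A 9 + A 2*A 4*A 5 + A 2*A 4*A 6 + A 2*A 4*A 7 + A 2*A 4*A 8 + A 2*A 4*A 9 + A 2*A 5*A 6 + A 2*A 5*A 7 + A 2*A 5*A 8 + A 2*A 5*A 9 + A 2*A 6*A 7 + A 2*A 6*A 8 + A 2*A 6*A 9 + A 2*A 7*A 8 + A 2*A 7*A 9 + A 2*A 8*A 9 + A 3*A 4*A 5 + A 3*A 4*A 6 + A 3*A 4*A 7 + A 3*A 4*A 8 + A 3*A 4*A 9 + A 3*A 5*A 6 + A 3*A 5*A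 7 + A 3*A 5*A 8 + A 3*A 5*A 9 + A 3*A 6*A 7 + A 3*A 6*A 8 + A 3*A 6*A 9 + A 3*A 7*A 8 + A 3*A 7*A 9 + A 3*A 8*A 9 + A 4*A 5*A 6 + A 4*A 5*A 7 + A 4*A 5*A 8 + A 4*A 5*A 9 + A 4*A 6*A 7 + A 4*A 6*A 8 + A 4*A 6*A 9 + A 4*A 7*A 8 + A 4*A 7*A 9 + A 4*A 8*A 9 + A 5*A 6*A 7 + A 5*A 6*A 8 + A 5*A 6*A 9 + A 5*A 7*A 8 + A 5*A 7*A 9 + A 5*A 8*A 9 + A 6*A 7*A 8 + A 6*A 7*A 9 + A 6*A 8*A 9 + A 7*A 8*A 9 := by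
  rw [esymmFam, show (Finset.univ.powersetCard 3 : Finset (Finset (Fin 10))) =
    ([({0,1,2} : Finset (Fin 10)),({0,1,3} : Finset (Fin 10)),({0,1,4} : Finset (Fin 10)),({0,1,5} : Finset (Fin 10)),({0,1,6} : Finset (Fin 10)),({0,1,7} : Finset (Fin 10)),({0,1,8} : Finset (Fin 10)),({0,1,9} : Finset (Fin 10)),({0,2,3} : Finset (Fin 10)),({0,2,4} : Finset (Fin 10)),({0,2,5} : Finset (Fin 10)),({0,2,6} : Finset (Fin 10)),({0,2,7} : Finset (Fin 10)),({0,2,8} : Finset (Fin 10)),({0,2,9} : Finset (Fin 10)),({0,3,4} : Finset (Fin 10)),({0,3,5} : Finset (Fin 10)),({0,3,6} : Finset (Fin 10)),({0,3,7} : Finset (Fin 10)),({0,3,8} : Finset (Fin 10)),({0,3,9} : Finset (Fin 10)),({0,4,5} : Finset (Fin 10)),({0,4,6} : Finset (Fin 10)),({0,4,7} : Finset (Fin 10)),({0,4,8} : Finset (Fin 10)),({0,4,9} : Finset (Fin 10)),({0,5,6} : Finset (Fin 10)),({0,5,7} : Finset (Fin 10)),({0,5,8} : Finset (Fin 10)),({0,5,9}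 : Finset (Fin 10)),({0,6,7} : Finset (Fin 10)),({0,6,8} : Finset (Fin 10)),({0,6,9} : Finset (Fin 10)),({0,7,8} : Finset (Fin 10)),({0,7,9} : Finset (Fin 10)),({0,8,9} : Finset (Fin 10)),({1,2,3} : Finset (Fin 10)),({1,2,4} : Finset (Fin 10)),({1,2,5} : Finset (Fin 10)),({1,2,6} : Finset (Fin 10)),({1,2,7} : Finset (Fin 10)),({1,2,8} : Finset (Fin 10)),({1,2,9} : Finset (Fin 10)),({1,3,4} : Finset (Fin 10)),({1,3,5} : Finset (Fin 10)),({1,3,6} : Finset (Fin 10)),({1,3,7} : Finset (Fin 10)),({1,3,8} : Finset (Fin 10)),({1,3,9} : Finset (Fin 10)),({1,4,5} : Finset (Fin 10)),({1,4,6} : Finset (Fin 10)),({1,4,7} : Finset (Fin 10)),({1,4,8} : Finset (Fin 10)),({1,4,9} : Finset (Fin 10)),({1,5,6} : Finset (Fin 10)),({1,5,7} : Finset (Fin 10)),({1,5,8} : Finset (Fin 10)),({1,5,9} : Finset (Fin 10)),({1,6,7} : Finset (Fin 10)),({1,6,8} : Finset (Fin 10)),({1,6,9} : Finset (Fin 10)),({1,7,8}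 : Finset (Fin 10)),({1,7,9} : Finset (Fin 10)),({1,8,9} : Finset (Fin 10)),({2,3,4} : Finset (Fin 10)),({2,3,5} : Finset (Fin 10)),({2,3,6} : Finset (Fin 10)),({2,3,7} : Finset (Fin 10)),({2,3,8} : Finset (Fin 10)),({2,3,9} : Finset (Fin 10)),({2,4,5} : Finset (Fin 10)),({2,4,6} : Finset (Fin 10)),({2,4,7} : Finset (Fin 10)),({2,4,8} : Finset (Fin 10)),({2,4,9} : Finset (Fin 10)),({2,5,6} : Finset (Fin 10)),({2,5,7} : Finset (Fin 10)),({2,5,8} : Finset (Fin 10)),({2,5,9} : Finset (Fin 10)),({2,6,7} : Finset (Fin 10)),({2,6,8} : Finset (Fin 10)),({2,6,9} : Finset (Fin 10)),({2,7,8} : Finset (Fin 10)),({2,7,9} : Finset (Fin 10)),({2,8,9} : Finset (Fin 10)),({3,4,5} : Finset (Fin 10)),({3,4,6} : Finset (Fin 10)),({3,4,7} : Finset (Fin 10)),({3,4,8} : Finset (Fin 10)),({3,4,9} : Finset (Fin 10)),({3,5,6} : Finset (Fin 10)),({3,5,7} : Finset (Fin 10)),({3,5,8} : Finset (Fin 10)),({3,5,9}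 : Finset (Fin 10)),({3,6,7} : Finset (Fin 10)),({3,6,8} : Finset (Fin 10)),({3,6,9} : Finset (Fin 10)),({3,7,8} : Finset (Fin 10)),({3,7,9} : Finset (Fin 10)),({3,8,9} : Finset (Fin 10)),({4,5,6} : Finset (Fin 10)),({4,5,7} : Finset (Fin 10)),({4,5,8} : Finset (Fin 10)),({4,5,9} : Finset (Fin 10)),({4,6,7} : Finset (Fin 10)),({4,6,8} : Finset (Fin 10)),({4,6,9} : Finset (Fin 10)),({4,7,8} : Finset (Fin 10)),({4,7,9} : Finset (Fin 10)),({4,8,9} : Finset (Fin 10)),({5,6,7} : Finset (Fin 10)),({5,6,8} : Finset (Fin 10)),({5,6,9} : Finset (Fin 10)),({5,7,8} : Finset (Fin 10)),({5,7,9} : Finset (Fin 10)),({5,8,9} : Finset (Fin 10)),({6,7,8} : Finset (Fin 10)),({6,7,9} : Finset (Fin 10)),({6,8,9} : Finset (Fin 10)),({7,8,9} : Finset (Fin 10))]).toFinset from by decide,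
    List.sum_toFinset _ (by decide)]
  simp +decide [Finset.prod_insert, Finset.mem_singleton]
  ring

lemma esymmT0 {K : Type*} [CommRing K] (A : Fin 5 → K) :
    esymmFam A 0 = 1 := by
  simp [esymmFam]

lemma esymmT1 {K : Type*} [CommRing K] (A : Fin 5 → K) :
    esymmFam A 1 = A 0 + A 1 + A 2 + A 3 + A 4 := by
  rw [esymmFam, show (Finset.univ.powersetCard 1 : Finset (Finset (Fin 5))) =
    ([({0} : Finset (Fin 5)),({1} : Finset (Fin 5)),({2} : Finset (Fin 5)),({3} : Finset (Fin 5)),({4} : Finset (Fin 5))]).toFinset from by decide,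
    List.sum_toFinset _ (by decide)]
  simp +decide [Finset.prod_insert, Finset.mem_singleton]
  ring

lemma esymmT2 {K : Type*} [CommRing K] (A : Fin 5 → K) :
    esymmFam A 2 = A 0*A 1 + A 0*A 2 + A 0*A 3 + A 0*A 4 + A 1*A 2 + A 1*A 3 + A 1*A 4 + A 2*A 3 + A 2*A 4 + A 3*A 4 := by
  rw [esymmFam, show (Finset.univ.powersetCard 2 : Finset (Finset (Fin 5))) =
    ([({0,1} : Finset (Fin 5)),({0,2} : Finset (Fin 5)),({0,3} : Finset (Fin 5)),({0,4} : Finset (Fin 5)),({1,2} : Finset (Fin 5)),({1,3} : Finset (Fin 5)),({1,4} : Finset (Fin 5)),({2,3} : Finset (Fin 5)),({2,4} : Finset (Fin 5)),({3,4} : Finset (Fin 5))]).toFinset from by decide,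
    List.sum_toFinset _ (by decide)]
  simp +decide [Finset.prod_insert, Finset.mem_singleton]
  ring

lemma esymmT3 {K : Type*} [CommRing K] (A : Fin 5 → K) :
    esymmFam A 3 = A 0*A 1*A 2 + A 0*A 1*A 3 + A 0*A 1*A 4 + A 0*A 2*A 3 + A 0*A 2*A 4 + A 0*A 3*A 4 + A 1*A 2*A 3 + A 1*A 2*A 4 + A 1*A 3*A 4 + A 2*A 3*A 4 := by
  rw [esymmFam, show (Finset.univ.powersetCard 3 : Finset (Finset (Fin 5))) =
    ([({0,1,2} : Finset (Fin 5)),({0,1,3} : Finset (Fin 5)),({0,1,4} : Finset (Fin 5)),({0,2,3} : Finset (Fin 5)),({0,2,4} : Finset (Fin 5)),({0,3,4} : Finset (Fin 5)),({1,2,3} : Finset (Fin 5)),({1,2,4} : Finset (Fin 5)),({1,3,4} : Finset (Fin 5)),({2,3,4} : Finset (Fin 5))]).toFinset from by decide,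
    List.sum_toFinset _ (by decide)]
  simp +decide [Finset.prod_insert, Finset.mem_singleton]
  ring

lemma esymmT4 {K : Type*} [CommRing K] (A : Fin 5 → K) :
    esymmFam A 4 = A 0*A 1*A 2*A 3 + A 0*A 1*A 2*A 4 + A 0*A 1*A 3*A 4 + A 0*A 2*A 3*A 4 + A 1*A 2*A 3*A 4 := by
  rw [esymmFam, show (Finset.univ.powersetCard 4 : Finset (Finset (Fin 5))) =
    ([({0,1,2,3} : Finset (Fin 5)),({0,1,2,4} : Finset (Fin 5)),({0,1,3,4} : Finset (Fin 5)),({0,2,3,4} : Finset (Fin 5)),({1,2,3,4} : Finset (Fin 5))]).toFinset from by decide,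
    List.sum_toFinset _ (by decide)]
  simp +decide [Finset.prod_insert, Finset.mem_singleton]
  ring

lemma esymmT5 {K : Type*} [CommRing K] (A : Fin 5 → K) :
    esymmFam A 5 = A 0*A 1*A 2*A 3*A 4 := by
  rw [esymmFam, show (Finset.univ.powersetCard 5 : Finset (Finset (Fin 5))) =
    ([({0,1,2,3,4} : Finset (Fin 5))]).toFinset from by decide,
    List.sum_toFinset _ (by decide)]
  simp +decide [Finset.prod_insert, Finset.mem_singleton]
  ring

lemma h2_expand {K : Type*} [CommRing K] (A : Fin 10 → K) :
    h2Fam A = A 0 * A 0 + A 0 * A 1 + A 0 * A 2 + A 0 * A 3 + A 0 * A 4 + A 0 * A 5 + A 0 * A 6 + A 0 * A 7 + A 0 * A 8 + A 0 * A 9 + A 1 * A 1 + A 1 * A 2 + A 1 * A 3 + A 1 * A 4 + A 1 * A 5 + A 1 * A 6 + A 1 * A 7 + A 1 * A 8 + A 1 * A 9 + A 2 * A 2 + A 2 * A 3 + A 2 * A 4 + A 2 * A 5 + A 2 * A 6 + A 2 * A 7 + A 2 * A 8 + A 2 * A 9 + A 3 * A 3 + A 3 * A 4 + A 3 * A 5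 + A 3 * A 6 + A 3 * A 7 + A 3 * A 8 + A 3 * A 9 + A 4 * A 4 + A 4 * A 5 + A 4 * A 6 + A 4 * A 7 + A 4 * A 8 + A 4 * A 9 + A 5 * A 5 + A 5 * A 6 + A 5 * A 7 + A 5 * A 8 + A 5 * A 9 + A 6 * A 6 + A 6 * A 7 + A 6 * A 8 + A 6 * A 9 + A 7 * A 7 + A 7 * A 8 + A 7 * A 9 + A 8 * A 8 + A 8 * A 9 + A 9 * A 9 := by
  rw [h2Fam, show (Finset.univ.filter (fun p : Fin 10 × Fin 10 => p.1 ≤ p.2)) =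
    ([((0,0) : Fin 10 × Fin 10),((0,1) : Fin 10 × Fin 10),((0,2) : Fin 10 × Fin 10),((0,3) : Fin 10 × Fin 10),((0,4) : Fin 10 × Fin 10),((0,5) : Fin 10 × Fin 10),((0,6) : Fin 10 × Fin 10),((0,7) : Fin 10 × Fin 10),((0,8) : Fin 10 × Fin 10),((0,9) : Fin 10 × Fin 10),((1,1) : Fin 10 × Fin 10),((1,2) : Fin 10 × Fin 10),((1,3) : Fin 10 × Fin 10),((1,4) : Fin 10 × Fin 10),((1,5) : Fin 10 × Fin 10),((1,6) : Fin 10 × Fin 10),((1,7) : Fin 10 × Fin 10),((1,8) : Fin 10 × Fin 10),((1,9) : Fin 10 × Fin 10),((2,2) : Fin 10 × Fin 10),((2,3) : Fin 10 × Fin 10),((2,4) : Fin 10 × Fin 10),((2,5) : Fin 10 × Fin 10),((2,6) : Fin 10 × Fin 10),((2,7) : Fin 10 × Fin 10),((2,8) : Fin 10 × Fin 10),((2,9) : Fin 10 × Fin 10),((3,3) : Fin 10 × Fin 10),((3,4) : Fin 10 × Fin 10),((3,5) : Fin 10 × Fin 10),((3,6) : Fin 10 × Fin 10),((3,7) : Fin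 10 × Fin 10),((3,8) : Fin 10 × Fin 10),((3,9) : Fin 10 × Fin 10),((4,4) : Fin 10 × Fin 10),((4,5) : Fin 10 × Fin 10),((4,6) : Fin 10 × Fin 10),((4,7) : Fin 10 × Fin 10),((4,8) : Fin 10 × Fin 10),((4,9) : Fin 10 × Fin 10),((5,5) : Fin 10 × Fin 10),((5,6) : Fin 10 × Fin 10),((5,7) : Fin 10 × Fin 10),((5,8) : Fin 10 × Fin 10),((5,9) : Fin 10 × Fin 10),((6,6) : Fin 10 × Fin 10),((6,7) : Fin 10 × Fin 10),((6,8) : Fin 10 × Fin 10),((6,9) : Fin 10 × Fin 10),((7,7) : Fin 10 × Fin 10),((7,8) : Fin 10 × Fin 10),((7,9) : Fin 10 × Fin 10),((8,8) : Fin 10 × Fin 10),((8,9) : Fin 10 × Fin 10),((9,9) : Fin 10 × Fin 10)]).toFinset from by decide,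
    List.sum_toFinset _ (by decide)]
  simp
  ring

/-- Character identity underlying the Proposition of [Zth] on the linearized field
content of 11-dimensional supergravity on a Kähler 10-fold: with weights
`t₁,…,t₅` on `T^{1,0}Z` satisfying `∏ tᵢ = 1`, and `A` the ten-element family
`(t₁,…,t₅,t₁⁻¹,…,t₅⁻¹)`, the total character of
(traceless metric) − (diffeomorphisms) + (3-form modulo exact) + (RS field modulo exact)
equals `−v·(Eplus − Eminus)`, i.e. the character of `−T^{1,0}⊗(S₊ − S₋)`. -/
theorem sugra_field_content {K : Type*} [Field K]
    (t : Fin 5 → K) (ht : ∀ i, t i ≠ 0) (hprod : ∏ i, t i = 1) :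
    ∀ (A : Fin 10 → K), A = Fin.append t (fun i => (t i)⁻¹) →
    ∀ v Eplus Eminus : K,
      v = t 0 + t 1 + t 2 + t 3 + t 4 →
      Eplus = esymmFam t 0 + esymmFam t 2 + esymmFam t 4 →
      Eminus = esymmFam t 1 + esymmFam t 3 + esymmFam t 5 →
      (h2Fam A - 1) - esymmFam A 1 +
        (esymmFam A 3 - esymmFam A 2 + esymmFam A 1 - 1) +
        (-(esymmFam A 1) * Eplus + Eplus + Eminus) = -v * (Eplus - Eminus) := by
  intro A hA v Eplus Eminus hv hEp hEm
  have hp : t 0 * t 1 * t 2 * t 3 * t 4 = 1 := by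
    rw [← hprod, Fin.prod_univ_five]
  have a0 : A 0 = t 0 := by rw [hA]; rfl
  have a1 : A 1 = t 1 := by rw [hA]; rfl
  have a2 : A 2 = t 2 := by rw [hA]; rfl
  have a3 : A 3 = t 3 := by rw [hA]; rfl
  have a4 : A 4 = t 4 := by rw [hA]; rfl
  have a5 : A 5 = (t 0)⁻¹ := by rw [hA]; rfl
  have a6 : A 6 = (t 1)⁻¹ := by rw [hA]; rfl
  have a7 : A 7 = (t 2)⁻¹ := by rw [hA]; rfl
  have a8 : A 8 = (t 3)⁻¹ := by rw [hA]; rfl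
  have a9 : A 9 = (t 4)⁻¹ := by rw [hA]; rfl
  have m0 : t 0 * (t 1 * t 2 * t 3 * t 4) = 1 := by linear_combination hp
  have i0 : (t 0)⁻¹ = t 1 * t 2 * t 3 * t 4 := inv_eq_of_mul_eq_one_right m0
  have m1 : t 1 * (t 0 * t 2 * t 3 * t 4) = 1 := by linear_combination hp
  have i1 : (t 1)⁻¹ = t 0 * t 2 * t 3 * t 4 := inv_eq_of_mul_eq_one_right m1
  have m2 : t 2 * (t 0 * t 1 * t 3 * t 4) = 1 := by linear_combination hp
  have i2 : (t 2)⁻¹ = t 0 * t 1 * t 3 * t 4 := inv_eq_of_mul_eq_one_right m2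
  have m3 : t 3 * (t 0 * t 1 * t 2 * t 4) = 1 := by linear_combination hp
  have i3 : (t 3)⁻¹ = t 0 * t 1 * t 2 * t 4 := inv_eq_of_mul_eq_one_right m3
  have m4 : t 4 * (t 0 * t 1 * t 2 * t 3) = 1 := by linear_combination hp
  have i4 : (t 4)⁻¹ = t 0 * t 1 * t 2 * t 3 := inv_eq_of_mul_eq_one_right m4
  rw [h2_expand, esymmA1, esymmA2, esymmA3, esymmT0, esymmT1, esymmT2, esymmT3, esymmT4, esymmT5] at *
  simp only [a0,a1,a2,a3,a4,a5,a6,a7,a8,a9,i0,i1,i2,i3,i4] at *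
  subst hv hEp hEm
  linear_combination (1 + (-1 : K)*t 4 + (-1 : K)*t 3 + t 3*t 4 + (-1 : K)*t 2 + t 2*t 4 + t 2*t 3 + (-2 : K)*t 2*t 3*t 4 + t 2*t 3*t 4*t 4 + t 2*t 3*t 3*t 4 + t 2*t 2*t 3*t 4 + (-1 : K)*t 1 + t 1*t 4 + t 1*t 3 + (-2 : K)*t 1*t 3*t 4 + t 1*t 3*t 4*t 4 + t 1*t 3*t 3*t 4 + t 1*t 2 + (-2 : K)*t 1*t 2*t 4 + t 1*t 2*t 4*t 4 + (-2 : K)*t 1*t 2*t 3 + 4*t 1*t 2*t 3*t 4 + t 1*t 2*t 3*t 3 + t 1*t 2*t 2*t 4 + t 1*t 2*t 2*t 3 + t 1*t 1*t 3*t 4 + t 1*t 1*t 2*t 4 + t 1*t 1*t 2*t 3 + (-1 : K)*t 0 + t 0*t 4 + t 0*t 3 + (-2 : K)*t 0*t 3*t 4 + t 0*t 3*t 4*t 4 + t 0*t 3*t 3*t 4 + t 0*t 2 + (-2 : K)*t 0*t 2*t 4 + t 0*t 2*t 4*t 4 + (-2 : K)*t 0*t 2*t 3 + 4*t 0*t 2*t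 3*t 4 + t 0*t 2*t 3*t 3 + t 0*t 2*t 2*t 4 + t 0*t 2*t 2*t 3 + t 0*t 1 + (-2 : K)*t 0*t 1*t 4 + t 0*t 1*t 4*t 4 + (-2 : K)*t 0*t 1*t 3 + 4*t 0*t 1*t 3*t 4 + t 0*t 1*t 3*t 3 + (-2 : K)*t 0*t 1*t 2 + 4*t 0*t 1*t 2*t 4 + 4*t 0*t 1*t 2*t 3 + t 0*t 1*t 2*t 3*t 3*t 4*t 4 + t 0*t 1*t 2*t 2 + t 0*t 1*t 2*t 2*t 3*t 4*t 4 + t 0*t 1*t 2*t 2*t 3*t 3*t 4 + t 0*t 1*t 1*t 4 + t 0*t 1*t 1*t 3 + t 0*t 1*t 1*t 2 + t 0*t 1*t 1*t 2*t 3*t 4*t 4 + t 0*t 1*t 1*t 2*t 3*t 3*t 4 + t 0*t 1*t 1*t 2*t 2*t 3*t 4 + t 0*t 0*t 3*t 4 + t 0*t 0*t 2*t 4 + t 0*t 0*t 2*t 3 + t 0*t 0*t 1*t 4 + t 0*t 0*t 1*t 3 + t 0*t 0*t 1*t 2 + t 0*t 0*t 1*t 2*t 3*t 4*t 4 + t 0*t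 0*t 1*t 2*t 3*t 3*t 4 + t 0*t 0*t 1*t 2*t 2*t 3*t 4 + t 0*t 0*t 1*t 1*t 2*t 3*t 4) * hp
end

section
/- Let G be a commutative group (written multiplicatively), let κ ∈ G, and let m : G → ℤ be a finitely supported function satisfying m(κ·g⁻¹) = −m(g) for all g ∈ G. Call a subset P ⊆ G a polarization if P is contained in the support of m and for every g with m(g) ≠ 0 exactly one of the two conditions 'g ∈ P' and 'κ·g⁻¹ ∈ P' holds. Then: (1) for any two polarizations P and P′, the element (∏_{g ∈ P} g^{m(g)}) · (∏_{g ∈ P′} g^{m(g)})⁻¹ is an integer power of κ; and (2) for any polarization P, the element (∏_{g ∈ P} g^{m(g)})² · (∏_{g ∈ supp m} g^{m(g)})⁻¹ is an integer power of κ. -/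
open Finset

/-- A polarization for a finitely supported weight multiplicity function `m` on the
character group `G`, antisymmetric under `g ↦ κ·g⁻¹`: a subset `P` of the support of `m`
such that for every `g` with `m g ≠ 0`, exactly one of `g ∈ P` and `κ·g⁻¹ ∈ P` holds. -/
def IsPolarization {G : Type*} [CommGroup G] (κ : G) (m : G →₀ ℤ) (P : Finset G) : Prop :=
  P ⊆ m.support ∧ ∀ g : G, m g ≠ 0 → Xor' (g ∈ P) (κ * g⁻¹ ∈ P)

/-- Weight-theoretic content of the Lemma of Section 7.2: for a virtual normal bundle
with weight multiplicities `m` satisfying `m(κ·g⁻¹) = −m(g)`,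
(1) `det 𝒩₊` is independent of the choice of chamber (polarization) modulo powers of `κ`;
(2) `det 𝒩 = (det 𝒩₊)²` modulo powers of `κ`. -/
theorem det_N_plus_chamber_independence {G : Type*} [CommGroup G]
    (κ : G) (m : G →₀ ℤ) (hm : ∀ g : G, m (κ * g⁻¹) = -m g) :
    (∀ P P' : Finset G, IsPolarization κ m P → IsPolarization κ m P' →
      ∃ k : ℤ, (∏ g ∈ P, g ^ m g) * (∏ g ∈ P', g ^ m g)⁻¹ = κ ^ k) ∧
    (∀ P : Finset G, IsPolarization κ m P →
      ∃ k : ℤ, (∏ g ∈ P, g ^ m g) ^ 2 * (∏ g ∈ m.support, g ^ m g)⁻¹ = κ ^ k) := by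
  classical
  set σ : G → G := fun g => κ * g⁻¹ with hσ
  have hσσ : ∀ g, σ (σ g) = g := by intro g; simp [hσ]
  have hσinj : Function.Injective σ := by
    intro a b h; simpa [hσ] using h
  have pow_sum : ∀ (S : Finset G) (f : G → ℤ), ∏ g ∈ S, κ ^ f g = κ ^ (∑ g ∈ S, f g) := by
    intro S f
    induction S using Finset.cons_induction with
    | empty => simp
    | cons a s ha ih => rw [Finset.prod_cons, Finset.sum_cons, ih, zpow_add]
  have key : ∀ S : Finset G,
      (∏ g ∈ S.image σ, g ^ m g) = κ ^ (-(∑ g ∈ S, m g)) * ∏ g ∈ S, g ^ m g := by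
    intro S
    rw [Finset.prod_image (fun a _ b _ h => hσinj h)]
    have h1 : ∀ g ∈ S, (σ g) ^ m (σ g) = κ ^ (-(m g)) * g ^ m g := by
      intro g _
      rw [hσ]; simp only [hm g]
      rw [mul_zpow, inv_zpow, ← zpow_neg, neg_neg]
    rw [Finset.prod_congr rfl h1, Finset.prod_mul_distrib, pow_sum]
    rw [← Finset.sum_neg_distrib]
  constructor
  · intro P P' hP hP'
    refine ⟨∑ g ∈ P \ P', m g, ?_⟩
    have himg : P' \ P = (P \ P').image σ := by
      ext g
      simp only [Finset.mem_sdiff, Finset.mem_image]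
      constructor
      · rintro ⟨hgP', hgP⟩
        have hmg : m g ≠ 0 := by
          simpa [Finsupp.mem_support_iff] using hP'.1 hgP'
        have hσgP : σ g ∈ P := by
          rcases hP.2 g hmg with ⟨h1, _⟩ | ⟨h1, _⟩
          · exact absurd h1 hgP
          · exact h1
        have hσgP' : σ g ∉ P' := by
          intro hmem
          have hmσ : m (σ g) ≠ 0 := by rw [hσ]; simp only [hm]; simpa using hmg
          rcases hP'.2 (σ g) hmσ with ⟨_, h2⟩ | ⟨_, h2⟩
          · exact h2 (by rw [show κ * (σ g)⁻¹ = g from hσσ g]; exact hgP')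
          · exact h2 hmem
        exact ⟨σ g, ⟨hσgP, hσgP'⟩, hσσ g⟩
      · rintro ⟨h, ⟨hhP, hhP'⟩, rfl⟩
        have hmh : m h ≠ 0 := by
          simpa [Finsupp.mem_support_iff] using hP.1 hhP
        constructor
        · rcases hP'.2 h hmh with ⟨h1, _⟩ | ⟨h1, _⟩
          · exact absurd h1 hhP'
          · exact h1
        · rcases hP.2 h hmh with ⟨_, h2⟩ | ⟨_, h2⟩
          · exact h2
          · exact absurd hhP h2
    have e1 : (∏ g ∈ P, g ^ m g) = (∏ g ∈ P \ P', g ^ m g) * ∏ g ∈ P ∩ P', g ^ m g := by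
      rw [← Finset.prod_union (Finset.disjoint_sdiff_inter P P')]
      congr 1
      exact (Finset.sdiff_union_inter P P').symm
    have e2 : (∏ g ∈ P', g ^ m g) = (∏ g ∈ P' \ P, g ^ m g) * ∏ g ∈ P ∩ P', g ^ m g := by
      rw [Finset.inter_comm P P', ← Finset.prod_union (Finset.disjoint_sdiff_inter P' P)]
      congr 1
      exact (Finset.sdiff_union_inter P' P).symm
    rw [e1, e2, himg, key (P \ P')]
    group
  · intro P hP
    refine ⟨∑ g ∈ P, m g, ?_⟩
    have hsupp : m.support = P ∪ P.image σ := by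
      ext g
      simp only [Finset.mem_union, Finset.mem_image, Finsupp.mem_support_iff]
      constructor
      · intro hg
        rcases hP.2 g hg with ⟨h1, _⟩ | ⟨h1, _⟩
        · exact Or.inl h1
        · exact Or.inr ⟨σ g, h1, hσσ g⟩
      · rintro (h | ⟨h, hh, rfl⟩)
        · simpa [Finsupp.mem_support_iff] using hP.1 h
        · have : m h ≠ 0 := by simpa [Finsupp.mem_support_iff] using hP.1 hh
          rw [hσ]; simp only [hm]; simpa using this
    have hdisj : Disjoint P (P.image σ) := by
      rw [Finset.disjoint_left]
      rintro g hgP hgimg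
      rcases Finset.mem_image.mp hgimg with ⟨h, hh, rfl⟩
      have hmh : m h ≠ 0 := by simpa [Finsupp.mem_support_iff] using hP.1 hh
      rcases hP.2 h hmh with ⟨_, h2⟩ | ⟨_, h2⟩
      · exact h2 hgP
      · exact h2 hh
    rw [hsupp, Finset.prod_union hdisj, key P, sq]
    group
    rw [zpow_neg_one, mul_comm (∏ g ∈ P, g ^ m g) (κ ^ ∑ g ∈ P, m g)]
    exact mul_inv_cancel_right _ _
end
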